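/- Consider the reference update rule: for each κ, set x_i^ref[κ|k] = x_i*[κ|k-1] if conditions (h_i(x) ≤ 0 for all x ∈ x_i*[κ|k-1] ⊕ C_i) and (c_{ij}(x_i, x_j) ≤ 0 for all x_i ∈ x_i*[κ|k-1] ⊕ C_i and all x_j ∈ (x_j*[κ|k-1] ⊕ C_j) ∪ (x_j^ref[κ|k-1] ⊕ C_j), for all neighbors j) hold; otherwise set x_i^ref[κ|k] = x_i^ref[κ|k-1]. If at time k-1 the references satisfied h_i(x) ≤ 0 for all x ∈ x_i^ref[κ|k-1] ⊕ C_i and c_{ij}(x_i, x_j) ≤ 0 for all x_i ∈ x_i^ref[κ|k-1] ⊕ C_i, x_j ∈ x_j^ref[κ|k-1] ⊕ C_j, then the updated references satisfy the same conditions at time k: h_i(x) ≤ 0 for all x ∈ x_i^ref[κ|k] ⊕ C_i, and c_{ij}(x_i, x_j) ≤ 0 for all x_i ∈ x_i^ref[κ|k] ⊕ C_i and x_j ∈ x_j^ref[κ|k] ⊕ C_j, for every pair of neighbors i, j. -/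
import Mathlib


open Pointwise

/-- The parallel reference update rule preserves satisfaction of the local state
constraints and the coupled state constraints on the translated reference sets. -/
theorem stmt_8 (V : Type) [Fintype V]
    (n p : V → ℕ) (q : ℕ)
    (Nbr : V → V → Prop) (hNbr : ∀ i j, Nbr i j → Nbr j i)
    (h : ∀ i, (Fin (n i) → ℝ) → (Fin (p i) → ℝ))
    (C : ∀ i, Set (Fin (n i) → ℝ))
    (c : ∀ i j, (Fin (n i) → ℝ) → (Fin (n j) → ℝ) → (Fin q → ℝ))
    (hcsym : ∀ i j xi xj, c i j xi xj = c j i xj xi)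
    (xstar refold refnew : ∀ i, Fin (n i) → ℝ)
    -- the per-subsystem update condition
    (cond : V → Prop)
    (hcond : ∀ i, cond i ↔
      ((∀ x ∈ (xstar i) +ᵥ C i, h i x ≤ 0) ∧
        ∀ j, Nbr i j → ∀ xi ∈ (xstar i) +ᵥ C i,
          ∀ xj ∈ ((xstar j) +ᵥ C j) ∪ ((refold j) +ᵥ C j), c i j xi xj ≤ 0))
    -- the update rule applied in parallel by each subsystem
    (hupd : ∀ i, (cond i → refnew i = xstar i) ∧ (¬ cond i → refnew i = refold i))
    -- the references satisfied the conditions at the previous time step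
    (holdh : ∀ i, ∀ x ∈ (refold i) +ᵥ C i, h i x ≤ 0)
    (holdc : ∀ i j, Nbr i j → ∀ xi ∈ (refold i) +ᵥ C i,
      ∀ xj ∈ (refold j) +ᵥ C j, c i j xi xj ≤ 0) :
    (∀ i, ∀ x ∈ (refnew i) +ᵥ C i, h i x ≤ 0) ∧
      (∀ i j, Nbr i j → ∀ xi ∈ (refnew i) +ᵥ C i,
        ∀ xj ∈ (refnew j) +ᵥ C j, c i j xi xj ≤ 0) := by
  constructor
  · intro i x hx
    by_cases hi : cond i
    · rw [(hupd i).1 hi] at hx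
      exact ((hcond i).1 hi).1 x hx
    · rw [(hupd i).2 hi] at hx
      exact holdh i x hx
  · intro i j hij xi hxi xj hxj
    by_cases hi : cond i
    · rw [(hupd i).1 hi] at hxi
      by_cases hj : cond j
      · rw [(hupd j).1 hj] at hxj
        exact ((hcond i).1 hi).2 j hij xi hxi xj (Or.inl hxj)
      · rw [(hupd j).2 hj] at hxj
        exact ((hcond i).1 hi).2 j hij xi hxi xj (Or.inr hxj)
    · rw [(hupd i).2 hi] at hxi
      by_cases hj : cond j
      · rw [(hupd j).1 hj] at hxj
        rw [hcsym]
        exact ((hcond j).1 hj).2 i (hNbr i j hij) xj hxj xi (Or.inr hxi)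
      · rw [(hupd j).2 hj] at hxj
        exact holdc i j hij xi hxi xj hxj
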